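/- arXiv:1302.6029 — 4 statements merged into one kernel-verified Lean document; each statement's English description precedes it below -/
import Mathlib

section
/- For X a Pareto(α) random variable with α ∈ (1,2), the Laplace transform satisfies E(e^{-λX}) = 1 - μλ - Γ(1-α)λ^α + o(λ^α) as λ → 0⁺, where μ = α/(α-1). -/
open MeasureTheory Set Real Asymptotics Filter Topology

-- generic: continuous on Ioi 0, bounded by u^(1-α) near 0 and u^(-α) near ∞
lemma intOn_aux {α : ℝ} (hα1 : 1 < α) (hα2 : α < 2) (f : ℝ → ℝ)
    (hc : ContinuousOn f (Ioi 0))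
    (hb1 : ∀ u ∈ Ioc (0:ℝ) 1, ‖f u‖ ≤ u ^ (1-α))
    (hb2 : ∀ u ∈ Ioi (1:ℝ), ‖f u‖ ≤ u ^ (-α)) :
    IntegrableOn f (Ioi (0:ℝ)) := by
  rw [show Ioi (0:ℝ) = Ioc 0 1 ∪ Ioi 1 by rw [Ioc_union_Ioi_eq_Ioi]; norm_num]
  apply IntegrableOn.union
  · have hint : IntegrableOn (fun u : ℝ => u ^ (1-α)) (Ioc (0:ℝ) 1) := by
      rw [← intervalIntegrable_iff_integrableOn_Ioc_of_le (by norm_num : (0:ℝ) ≤ 1)]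
      exact intervalIntegral.intervalIntegrable_rpow' (by linarith)
    refine Integrable.mono' hint
      ((hc.mono Ioc_subset_Ioi_self).aestronglyMeasurable measurableSet_Ioc) ?_
    filter_upwards [ae_restrict_mem measurableSet_Ioc] with u hu using hb1 u hu
  · refine Integrable.mono' (integrableOn_Ioi_rpow_of_lt (by linarith : -α < -1) one_pos)
      ((hc.mono (Ioi_subset_Ioi zero_le_one)).aestronglyMeasurable measurableSet_Ioi) ?_
    filter_upwards [ae_restrict_mem measurableSet_Ioi] with u hu using hb2 u hu

lemma exp_facts (u : ℝ) (hu : 0 ≤ u) :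
    0 ≤ Real.exp (-u) - 1 + u ∧ Real.exp (-u) - 1 + u ≤ u ∧ 0 ≤ 1 - Real.exp (-u) ∧
      1 - Real.exp (-u) ≤ u := by
  have h1 := Real.add_one_le_exp (-u)
  have h2 := Real.exp_le_one_iff.mpr (by linarith : -u ≤ 0)
  refine ⟨by linarith, by linarith, by linarith, by linarith⟩

lemma quad_bound (u : ℝ) (hu : 0 ≤ u) (hu1 : u ≤ 1) :
    Real.exp (-u) - 1 + u ≤ u ^ 2 := by
  have h := Real.abs_exp_sub_one_sub_id_le (x := -u) (by rw [abs_neg, abs_of_nonneg hu]; exact hu1)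
  rw [abs_le] at h
  nlinarith [h.2]

lemma int2 {α : ℝ} (hα1 : 1 < α) (hα2 : α < 2) :
    IntegrableOn (fun u : ℝ => (1 - Real.exp (-u)) * u ^ (-α)) (Ioi (0:ℝ)) := by
  apply intOn_aux hα1 hα2
  · apply ContinuousOn.mul
    · exact (continuous_const.sub (Real.continuous_exp.comp continuous_neg)).continuousOn
    · intro x hx
      exact (Real.continuousAt_rpow_const x (-α) (Or.inl (ne_of_gt hx))).continuousWithinAt
  · intro u hu
    obtain ⟨_, _, h3, h4⟩ := exp_facts u hu.1.le
    rw [Real.norm_eq_abs, abs_mul, abs_of_nonneg h3, abs_of_nonneg (Real.rpow_nonneg hu.1.le _)]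
    calc (1 - Real.exp (-u)) * u ^ (-α) ≤ u * u ^ (-α) :=
          mul_le_mul_of_nonneg_right h4 (Real.rpow_nonneg hu.1.le _)
      _ = u ^ (1-α) := by
          rw [← Real.rpow_one_add' hu.1.le (by intro h; linarith)]; ring_nf
  · intro u hu
    have hu0 : (0:ℝ) < u := lt_trans one_pos hu
    obtain ⟨_, _, h3, _⟩ := exp_facts u hu0.le
    have h2 : 1 - Real.exp (-u) ≤ 1 := by have := Real.exp_pos (-u); linarith
    rw [Real.norm_eq_abs, abs_mul, abs_of_nonneg h3, abs_of_nonneg (Real.rpow_nonneg hu0.le _)]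
    nlinarith [Real.rpow_nonneg hu0.le (-α)]

lemma int3 {α : ℝ} (hα1 : 1 < α) (hα2 : α < 2) :
    IntegrableOn (fun u : ℝ => (Real.exp (-u) - 1 + u) * u ^ (-α-1)) (Ioi (0:ℝ)) := by
  apply intOn_aux hα1 hα2
  · apply ContinuousOn.mul
    · exact ((Real.continuous_exp.comp continuous_neg).sub continuous_const).add
        continuous_id |>.continuousOn
    · intro x hx
      exact (Real.continuousAt_rpow_const x (-α-1) (Or.inl (ne_of_gt hx))).continuousWithinAt
  · intro u hu
    obtain ⟨h1, _, _, _⟩ := exp_facts u hu.1.le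
    have hq := quad_bound u hu.1.le hu.2
    rw [Real.norm_eq_abs, abs_mul, abs_of_nonneg h1, abs_of_nonneg (Real.rpow_nonneg hu.1.le _)]
    calc (Real.exp (-u) - 1 + u) * u ^ (-α-1) ≤ u ^ 2 * u ^ (-α-1) :=
          mul_le_mul_of_nonneg_right hq (Real.rpow_nonneg hu.1.le _)
      _ = u ^ (1-α) := by
          rw [← Real.rpow_natCast u 2, ← Real.rpow_add hu.1]; ring_nf
  · intro u hu
    have hu0 : (0:ℝ) < u := lt_trans one_pos hu
    obtain ⟨h1, h2, _, _⟩ := exp_facts u hu0.le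
    rw [Real.norm_eq_abs, abs_mul, abs_of_nonneg h1, abs_of_nonneg (Real.rpow_nonneg hu0.le _)]
    calc (Real.exp (-u) - 1 + u) * u ^ (-α-1) ≤ u * u ^ (-α-1) :=
          mul_le_mul_of_nonneg_right h2 (Real.rpow_nonneg hu0.le _)
      _ = u ^ (-α) := by
          rw [← Real.rpow_one_add' hu0.le (by intro h; linarith)]; ring_nf

lemma keyA {α : ℝ} (hα1 : 1 < α) (hα2 : α < 2)
    (int2 : IntegrableOn (fun u : ℝ => (1 - Real.exp (-u)) * u ^ (-α)) (Ioi (0:ℝ))) :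
    ∫ u in Ioi (0:ℝ), (1 - Real.exp (-u)) * u ^ (-α) = -Real.Gamma (1-α) := by
  have hne : (1:ℝ) - α ≠ 0 := by intro h; linarith
  set F : ℝ → ℝ := fun u => (1 - Real.exp (-u)) * u ^ (1-α) / (1-α) with hF
  set f' : ℝ → ℝ := fun u =>
    Real.exp (-u) * u ^ (1-α) / (1-α) + (1 - Real.exp (-u)) * u ^ (-α) with hf'
  have hF0 : F 0 = 0 := by simp [hF]
  have intA : IntegrableOn (fun u : ℝ => Real.exp (-u) * u ^ (1-α) / (1-α)) (Ioi (0:ℝ)) := by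
    have h := Real.GammaIntegral_convergent (show (0:ℝ) < 2-α by linarith)
    rw [show (2:ℝ)-α-1 = 1-α by ring] at h
    exact h.div_const _
  have f'int : IntegrableOn f' (Ioi (0:ℝ)) := intA.add int2
  have hcont : ContinuousWithinAt F (Ici 0) 0 := by
    rw [ContinuousWithinAt, hF0]
    apply squeeze_zero_norm' (a := fun u => u ^ (2-α) / (α-1))
    · filter_upwards [self_mem_nhdsWithin] with u (hu : 0 ≤ u)
      rcases eq_or_lt_of_le hu with h | h
      · simp [hF, ← h, Real.zero_rpow (show (2:ℝ)-α ≠ 0 by intro h'; linarith),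
          Real.zero_rpow (show (1:ℝ)-α ≠ 0 from hne)]
      · have h1 := Real.add_one_le_exp (-u)
        have h2 := Real.exp_le_one_iff.mpr (by linarith : -u ≤ 0)
        have hrn := Real.rpow_nonneg hu (1-α)
        rw [hF, Real.norm_eq_abs, abs_div, abs_mul, abs_of_nonneg (by linarith),
          abs_of_nonneg hrn, abs_of_neg (by linarith : (1:ℝ)-α < 0)]
        rw [div_le_div_iff₀ (by linarith) (by linarith), neg_sub]
        have : (1 - Real.exp (-u)) * u ^ (1-α) ≤ u * u ^ (1-α) :=
          mul_le_mul_of_nonneg_right (by linarith) hrn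
        calc (1 - Real.exp (-u)) * u ^ (1-α) * (α-1) ≤ u * u ^ (1-α) * (α-1) := by
              apply mul_le_mul_of_nonneg_right this (by linarith)
          _ = u ^ (2-α) * (α-1) := by
              rw [← Real.rpow_one_add' hu (show (1:ℝ)+(1-α) ≠ 0 by intro h'; linarith),
                show (1:ℝ)+(1-α) = 2-α by ring]
    · have hc : ContinuousAt (fun u : ℝ => u ^ (2-α)) 0 :=
        Real.continuousAt_rpow_const 0 (2-α) (Or.inr (by linarith))
      have := (hc.continuousWithinAt (s := Ici 0)).tendsto
      rw [Real.zero_rpow (show (2:ℝ)-α ≠ 0 by intro h'; linarith)] at this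
      simpa using this.div_const (α-1)
  have hderiv : ∀ x ∈ Ioi (0:ℝ), HasDerivAt F (f' x) x := by
    intro x hx
    have hx0 : (0:ℝ) < x := hx
    have h1 : HasDerivAt (fun u : ℝ => 1 - Real.exp (-u)) (Real.exp (-x)) x := by
      simpa using ((Real.hasDerivAt_exp (-x)).comp x (hasDerivAt_neg x)).const_sub 1
    have h2 : HasDerivAt (fun u : ℝ => u ^ (1-α)) ((1-α) * x ^ (-α)) x := by
      have := Real.hasDerivAt_rpow_const (x := x) (p := 1-α) (Or.inl hx0.ne')
      rwa [show (1:ℝ)-α-1 = -α by ring] at this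
    have := (h1.mul h2).div_const (1-α)
    refine this.congr_deriv ?_
    simp only [hf']
    field_simp
  have htop : Tendsto F atTop (𝓝 0) := by
    have ta : Tendsto (fun u : ℝ => 1 - Real.exp (-u)) atTop (𝓝 1) := by
      simpa using tendsto_const_nhds.sub Real.tendsto_exp_neg_atTop_nhds_zero
    have tb : Tendsto (fun u : ℝ => u ^ (1-α)) atTop (𝓝 0) := by
      have := tendsto_rpow_neg_atTop (show (0:ℝ) < α-1 by linarith)
      rwa [show -(α-1) = 1-α by ring] at this
    simpa using (ta.mul tb).div_const (1-α)
  have hFTC := integral_Ioi_of_hasDerivAt_of_tendsto hcont hderiv f'int htop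
  rw [hF0, sub_zero] at hFTC
  have hsplit : ∫ u in Ioi (0:ℝ), f' u =
      (∫ u in Ioi (0:ℝ), Real.exp (-u) * u ^ (1-α) / (1-α)) +
        ∫ u in Ioi (0:ℝ), (1 - Real.exp (-u)) * u ^ (-α) := integral_add intA int2
  have hGam : ∫ u in Ioi (0:ℝ), Real.exp (-u) * u ^ (1-α) / (1-α)
      = Real.Gamma (2-α) / (1-α) := by
    rw [integral_div]
    congr 1
    rw [Real.Gamma_eq_integral (show (0:ℝ) < 2-α by linarith),
      show (2:ℝ)-α-1 = 1-α by ring]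
  have hGrec : Real.Gamma (2-α) = (1-α) * Real.Gamma (1-α) := by
    rw [show (2:ℝ)-α = (1-α)+1 by ring, Real.Gamma_add_one hne]
  rw [hFTC, hGam, hGrec] at hsplit
  field_simp at hsplit
  linarith

lemma keyB {α : ℝ} (hα1 : 1 < α) (hα2 : α < 2)
    (int2 : IntegrableOn (fun u : ℝ => (1 - Real.exp (-u)) * u ^ (-α)) (Ioi (0:ℝ)))
    (int3 : IntegrableOn (fun u : ℝ => (Real.exp (-u) - 1 + u) * u ^ (-α-1)) (Ioi (0:ℝ)))
    (hA : ∫ u in Ioi (0:ℝ), (1 - Real.exp (-u)) * u ^ (-α) = -Real.Gamma (1-α)) :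
    ∫ u in Ioi (0:ℝ), (Real.exp (-u) - 1 + u) * u ^ (-α-1) = -Real.Gamma (1-α) / α := by
  have hα0 : (0:ℝ) < α := by linarith
  set G : ℝ → ℝ := fun u => -((Real.exp (-u) - 1 + u) * u ^ (-α)) / α with hG
  set g' : ℝ → ℝ := fun u =>
    (Real.exp (-u) - 1 + u) * u ^ (-α-1) - (1 - Real.exp (-u)) * u ^ (-α) / α with hg'
  have hG0 : G 0 = 0 := by simp [hG]
  have g'int : IntegrableOn g' (Ioi (0:ℝ)) := int3.sub (int2.div_const α)
  have hcont : ContinuousWithinAt G (Ici 0) 0 := by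
    rw [ContinuousWithinAt, hG0]
    apply squeeze_zero_norm' (a := fun u => u ^ (2-α) / α)
    · filter_upwards [Icc_mem_nhdsGE_of_mem (by constructor <;> norm_num :
        (0:ℝ) ∈ Ico 0 1)] with u hu
      rcases eq_or_lt_of_le hu.1 with h | h
      · simp [hG, ← h, Real.zero_rpow (show (2:ℝ)-α ≠ 0 by intro h'; linarith),
          Real.zero_rpow (show -α ≠ 0 by intro h'; linarith)]
      · have hq : Real.exp (-u) - 1 + u ≤ u ^ 2 := by
          have hb := Real.abs_exp_sub_one_sub_id_le (x := -u)
            (by rw [abs_neg, abs_of_nonneg hu.1]; exact hu.2)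
          rw [abs_le] at hb; nlinarith [hb.2]
        have h0 : 0 ≤ Real.exp (-u) - 1 + u := by
          have := Real.add_one_le_exp (-u); linarith
        have hrn := Real.rpow_nonneg hu.1 (-α)
        rw [hG, Real.norm_eq_abs, abs_div, abs_neg, abs_mul, abs_of_nonneg h0,
          abs_of_nonneg hrn, abs_of_pos hα0]
        apply div_le_div_of_nonneg_right ?_ hα0.le |>.trans_eq rfl
        calc (Real.exp (-u) - 1 + u) * u ^ (-α) ≤ u ^ 2 * u ^ (-α) :=
              mul_le_mul_of_nonneg_right hq hrn
          _ = u ^ (2-α) := by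
              rw [← Real.rpow_natCast u 2, ← Real.rpow_add h, show ((2:ℕ):ℝ)+(-α) = 2-α by push_cast; ring]
    · have hc : ContinuousAt (fun u : ℝ => u ^ (2-α)) 0 :=
        Real.continuousAt_rpow_const 0 (2-α) (Or.inr (by linarith))
      have := (hc.continuousWithinAt (s := Ici 0)).tendsto
      rw [Real.zero_rpow (show (2:ℝ)-α ≠ 0 by intro h'; linarith)] at this
      simpa using this.div_const α
  have hderiv : ∀ x ∈ Ioi (0:ℝ), HasDerivAt G (g' x) x := by
    intro x hx
    have hx0 : (0:ℝ) < x := hx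
    have h1 : HasDerivAt (fun u : ℝ => Real.exp (-u) - 1 + u) (1 - Real.exp (-x)) x := by
      have e1 : HasDerivAt (fun u : ℝ => Real.exp (-u)) (-Real.exp (-x)) x := by
        simpa [Function.comp_def] using (Real.hasDerivAt_exp (-x)).comp x (hasDerivAt_neg x)
      have := (e1.sub_const 1).add (hasDerivAt_id x)
      refine this.congr_deriv ?_
      ring
    have h2 : HasDerivAt (fun u : ℝ => u ^ (-α)) (-α * x ^ (-α-1)) x := by
      simpa using Real.hasDerivAt_rpow_const (x := x) (p := -α) (Or.inl hx0.ne')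
    have := ((h1.mul h2).neg).div_const α
    refine this.congr_deriv ?_
    simp only [hg']
    field_simp
    ring
  have htop : Tendsto G atTop (𝓝 0) := by
    apply squeeze_zero_norm' (a := fun u : ℝ => u ^ (1-α) / α)
    · filter_upwards [eventually_ge_atTop (1:ℝ)] with u hu
      have hu0 : (0:ℝ) < u := lt_of_lt_of_le one_pos hu
      have h0 : 0 ≤ Real.exp (-u) - 1 + u := by
        have := Real.add_one_le_exp (-u); linarith
      have h2 : Real.exp (-u) - 1 + u ≤ u := by
        have := Real.exp_le_one_iff.mpr (by linarith : -u ≤ 0); linarith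
      have hrn := Real.rpow_nonneg hu0.le (-α)
      rw [hG, Real.norm_eq_abs, abs_div, abs_neg, abs_mul, abs_of_nonneg h0,
        abs_of_nonneg hrn, abs_of_pos hα0]
      apply div_le_div_of_nonneg_right ?_ hα0.le |>.trans_eq rfl
      calc (Real.exp (-u) - 1 + u) * u ^ (-α) ≤ u * u ^ (-α) :=
            mul_le_mul_of_nonneg_right h2 hrn
        _ = u ^ (1-α) := by
            rw [← Real.rpow_one_add' hu0.le (show (1:ℝ)+(-α) ≠ 0 by intro h'; linarith),
              show (1:ℝ)+(-α) = 1-α by ring]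
    · have := tendsto_rpow_neg_atTop (show (0:ℝ) < α-1 by linarith)
      rw [show -(α-1) = 1-α by ring] at this
      simpa using this.div_const α
  have hFTC := integral_Ioi_of_hasDerivAt_of_tendsto hcont hderiv g'int htop
  rw [hG0, sub_zero] at hFTC
  have hsplit : ∫ u in Ioi (0:ℝ), g' u =
      (∫ u in Ioi (0:ℝ), (Real.exp (-u) - 1 + u) * u ^ (-α-1)) -
        ∫ u in Ioi (0:ℝ), (1 - Real.exp (-u)) * u ^ (-α) / α :=
    integral_sub int3 (int2.div_const α)
  rw [hFTC, integral_div, hA] at hsplit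
  have : (∫ u in Ioi (0:ℝ), (Real.exp (-u) - 1 + u) * u ^ (-α-1)) = -Real.Gamma (1-α) / α := by
    linarith [hsplit]
  exact this

section
variable {α : ℝ}

-- integrands
noncomputable def gfun (α : ℝ) : ℝ → ℝ := fun y => (Real.exp (-y) - 1 + y) * (α * y ^ (-α-1))

lemma gfun_int (hα1 : 1 < α) (hα2 : α < 2)
    (int3 : IntegrableOn (fun u : ℝ => (Real.exp (-u) - 1 + u) * u ^ (-α-1)) (Ioi (0:ℝ))) :
    IntegrableOn (gfun α) (Ioi (0:ℝ)) := by
  exact IntegrableOn.congr_fun (int3.const_mul α) (fun y _ => by unfold gfun; ring) measurableSet_Ioi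

lemma gfun_integral (hα1 : 1 < α) (hα2 : α < 2)
    (int3 : IntegrableOn (fun u : ℝ => (Real.exp (-u) - 1 + u) * u ^ (-α-1)) (Ioi (0:ℝ)))
    (hB : ∫ u in Ioi (0:ℝ), (Real.exp (-u) - 1 + u) * u ^ (-α-1) = -Real.Gamma (1-α) / α) :
    ∫ y in Ioi (0:ℝ), gfun α y = -Real.Gamma (1-α) := by
  have h1 : ∫ y in Ioi (0:ℝ), gfun α y =
      ∫ y in Ioi (0:ℝ), α * ((Real.exp (-y) - 1 + y) * y ^ (-α-1)) :=
    setIntegral_congr_fun measurableSet_Ioi (fun y _ => by unfold gfun; ring)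
  rw [h1, integral_const_mul, hB]
  field_simp

-- step: the substitution + splitting, for fixed l > 0
lemma main_eq (hα1 : 1 < α) (hα2 : α < 2)
    (int3 : IntegrableOn (fun u : ℝ => (Real.exp (-u) - 1 + u) * u ^ (-α-1)) (Ioi (0:ℝ)))
    (hB : ∫ u in Ioi (0:ℝ), (Real.exp (-u) - 1 + u) * u ^ (-α-1) = -Real.Gamma (1-α) / α)
    {l : ℝ} (hl : 0 < l) :
    (∫ x in Ioi (1:ℝ), Real.exp (-(l * x)) * (α * x ^ (-(α + 1)))) -
      (1 - (α / (α - 1)) * l - Real.Gamma (1 - α) * l ^ α) =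
      -(l ^ α * ∫ y in Ioc (0:ℝ) l, gfun α y) := by
  have hα0 : (0:ℝ) < α := by linarith
  have hgint := gfun_int hα1 hα2 int3
  -- integrability pieces on Ioi 1
  have hrw : ∀ x ∈ Ioi (1:ℝ), x ^ (-(α+1)) = x ^ (-α-1) := by
    intro x _; congr 1; ring
  have i1 : IntegrableOn (fun x : ℝ => α * x ^ (-α-1)) (Ioi (1:ℝ)) :=
    (integrableOn_Ioi_rpow_of_lt (by linarith : -α-1 < -1) one_pos).const_mul α
  have i2 : IntegrableOn (fun x : ℝ => l * α * x ^ (-α)) (Ioi (1:ℝ)) :=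
    (integrableOn_Ioi_rpow_of_lt (by linarith : -α < -1) one_pos).const_mul (l*α)
  have key0 : ∀ x ∈ Ioi (1:ℝ), l * x * (α * x ^ (-α-1)) = l * α * x ^ (-α) := by
    intro x hx
    have hx0 : (0:ℝ) < x := lt_trans one_pos hx
    have hxx : x * x ^ (-α-1) = x ^ (-α) := by
      rw [← Real.rpow_one_add' hx0.le (show (1:ℝ)+(-α-1) ≠ 0 by intro h; linarith),
        show (1:ℝ)+(-α-1) = -α by ring]
    linear_combination (l*α) * hxx
  have i2' : IntegrableOn (fun x : ℝ => l * x * (α * x ^ (-α-1))) (Ioi (1:ℝ)) :=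
    i2.congr_fun (fun x hx => (key0 x hx).symm) measurableSet_Ioi
  have hcont4 : ContinuousOn (fun x : ℝ => (Real.exp (-(l*x)) - 1 + l*x) * (α * x ^ (-α-1)))
      (Ioi (1:ℝ)) := by
    apply ContinuousOn.mul
    · fun_prop
    · apply ContinuousOn.mul continuousOn_const
      intro x hx
      exact (Real.continuousAt_rpow_const x (-α-1)
        (Or.inl (ne_of_gt (lt_trans one_pos hx)))).continuousWithinAt
  have i4 : IntegrableOn (fun x : ℝ => (Real.exp (-(l*x)) - 1 + l*x) * (α * x ^ (-α-1)))
      (Ioi (1:ℝ)) := by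
    refine Integrable.mono' i2' (hcont4.aestronglyMeasurable measurableSet_Ioi) ?_
    filter_upwards [ae_restrict_mem measurableSet_Ioi] with x hx
    have hx0 : (0:ℝ) < x := lt_trans one_pos hx
    have hlx : 0 ≤ l * x := by positivity
    have h1 := Real.add_one_le_exp (-(l*x))
    have h2 := Real.exp_le_one_iff.mpr (by linarith : -(l*x) ≤ 0)
    have hw : 0 ≤ α * x ^ (-α-1) := by positivity
    rw [Real.norm_eq_abs, abs_mul, abs_of_nonneg (by linarith), abs_of_nonneg hw]
    exact mul_le_mul_of_nonneg_right (by linarith) hw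
  have i3 : IntegrableOn (fun x : ℝ => Real.exp (-(l*x)) * (α * x ^ (-α-1))) (Ioi (1:ℝ)) := by
    have hc : ContinuousOn (fun x : ℝ => Real.exp (-(l*x)) * (α * x ^ (-α-1))) (Ioi 1) := by
      apply ContinuousOn.mul
      · fun_prop
      · apply ContinuousOn.mul continuousOn_const
        intro x hx
        exact (Real.continuousAt_rpow_const x (-α-1)
          (Or.inl (ne_of_gt (lt_trans one_pos hx)))).continuousWithinAt
    refine Integrable.mono' i1 (hc.aestronglyMeasurable measurableSet_Ioi) ?_
    filter_upwards [ae_restrict_mem measurableSet_Ioi] with x hx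
    have hx0 : (0:ℝ) < x := lt_trans one_pos hx
    have h2 := Real.exp_le_one_iff.mpr (by nlinarith : -(l*x) ≤ 0)
    have hw : 0 ≤ α * x ^ (-α-1) := by positivity
    rw [Real.norm_eq_abs, abs_mul, abs_of_nonneg (Real.exp_pos _).le, abs_of_nonneg hw]
    calc Real.exp (-(l*x)) * (α * x ^ (-α-1)) ≤ 1 * (α * x ^ (-α-1)) :=
          mul_le_mul_of_nonneg_right h2 hw
      _ = α * x ^ (-α-1) := one_mul _
  -- split the integral
  have hsplit : ∫ x in Ioi (1:ℝ), Real.exp (-(l * x)) * (α * x ^ (-α-1)) =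
      (∫ x in Ioi (1:ℝ), (Real.exp (-(l*x)) - 1 + l*x) * (α * x ^ (-α-1))) +
        ((∫ x in Ioi (1:ℝ), α * x ^ (-α-1)) - ∫ x in Ioi (1:ℝ), l * x * (α * x ^ (-α-1))) := by
    have he : EqOn (fun x : ℝ => Real.exp (-(l * x)) * (α * x ^ (-α-1)))
        (fun x : ℝ => (Real.exp (-(l*x)) - 1 + l*x) * (α * x ^ (-α-1)) +
          (α * x ^ (-α-1) - l * x * (α * x ^ (-α-1)))) (Ioi 1) := fun x _ => by ring
    have i12 : IntegrableOn (fun x : ℝ => α * x ^ (-α-1) - l * x * (α * x ^ (-α-1)))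
        (Ioi (1:ℝ)) := i1.sub i2'
    rw [setIntegral_congr_fun measurableSet_Ioi he,
      integral_add i4 i12, integral_sub i1 i2']
  -- values of elementary integrals
  have v1 : ∫ x in Ioi (1:ℝ), α * x ^ (-α-1) = 1 := by
    rw [integral_const_mul, integral_Ioi_rpow_of_lt (by linarith : -α-1 < -1) one_pos]
    rw [show (-α-1+1 : ℝ) = -α by ring, Real.one_rpow]
    field_simp
  have v2 : ∫ x in Ioi (1:ℝ), l * x * (α * x ^ (-α-1)) = (α / (α-1)) * l := by
    rw [setIntegral_congr_fun measurableSet_Ioi key0, integral_const_mul,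
      integral_Ioi_rpow_of_lt (by linarith : -α < -1) one_pos,
      show (-α+1 : ℝ) = -(α-1) by ring, Real.one_rpow, neg_div_neg_eq]
    have h1 : α - 1 ≠ 0 := by linarith
    field_simp
  -- substitution
  have hsub : ∫ x in Ioi (1:ℝ), (Real.exp (-(l*x)) - 1 + l*x) * (α * x ^ (-α-1)) =
      l ^ α * ∫ y in Ioi l, gfun α y := by
    have hcomp := integral_comp_mul_left_Ioi (gfun α) 1 hl
    rw [mul_one] at hcomp
    have heq : ∀ x ∈ Ioi (1:ℝ), (Real.exp (-(l*x)) - 1 + l*x) * (α * x ^ (-α-1)) =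
        l ^ (α+1) * gfun α (l * x) := by
      intro x hx
      have hx0 : (0:ℝ) < x := lt_trans one_pos hx
      have hll : l ^ (α+1) * l ^ (-α-1) = 1 := by
        rw [← Real.rpow_add hl]; norm_num
      unfold gfun
      rw [Real.mul_rpow hl.le hx0.le]
      linear_combination (-(Real.exp (-(l*x)) - 1 + l*x) * α * x ^ (-α-1)) * hll
    have hpow : l ^ (α+1) * l⁻¹ = l ^ α := by
      rw [← Real.rpow_neg_one l, ← Real.rpow_add hl, show (α+1+(-1):ℝ) = α by ring]
    rw [setIntegral_congr_fun measurableSet_Ioi heq, integral_const_mul, hcomp,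
      smul_eq_mul, ← mul_assoc, hpow]
  -- splitting at l
  have hsplit2 : ∫ y in Ioi l, gfun α y =
      (∫ y in Ioi (0:ℝ), gfun α y) - ∫ y in Ioc (0:ℝ) l, gfun α y := by
    have hu : Ioc (0:ℝ) l ∪ Ioi l = Ioi (0:ℝ) := Ioc_union_Ioi_eq_Ioi hl.le
    have := setIntegral_union (Ioc_disjoint_Ioi le_rfl) measurableSet_Ioi
      (hgint.mono_set Ioc_subset_Ioi_self) (hgint.mono_set (Ioi_subset_Ioi hl.le))
    rw [hu] at this
    linarith [this]
  have hgval := gfun_integral hα1 hα2 int3 hB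
  calc (∫ x in Ioi (1:ℝ), Real.exp (-(l * x)) * (α * x ^ (-(α + 1)))) -
      (1 - (α / (α - 1)) * l - Real.Gamma (1 - α) * l ^ α)
      = (∫ x in Ioi (1:ℝ), Real.exp (-(l * x)) * (α * x ^ (-α-1))) -
        (1 - (α / (α - 1)) * l - Real.Gamma (1 - α) * l ^ α) := by
        rw [show -(α+1) = -α-1 by ring]
    _ = -(l ^ α * ∫ y in Ioc (0:ℝ) l, gfun α y) := by
        rw [hsplit, v1, v2, hsub, hsplit2, hgval]; ring

end

lemma Rl_bound {α : ℝ} (hα1 : 1 < α) (hα2 : α < 2)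
    (hgint : IntegrableOn (gfun α) (Ioi (0:ℝ)))
    {l : ℝ} (hl0 : 0 < l) (hl1 : l ≤ 1) :
    0 ≤ (∫ y in Ioc (0:ℝ) l, gfun α y) ∧
      (∫ y in Ioc (0:ℝ) l, gfun α y) ≤ α * (l ^ (2-α) / (2-α)) := by
  have hα0 : (0:ℝ) < α := by linarith
  constructor
  · apply setIntegral_nonneg measurableSet_Ioc
    intro y hy
    have h0 : 0 ≤ Real.exp (-y) - 1 + y := by
      have := Real.add_one_le_exp (-y); linarith
    unfold gfun
    have := Real.rpow_nonneg hy.1.le (-α-1)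
    positivity
  · have hint2 : IntegrableOn (fun y : ℝ => α * y ^ (1-α)) (Ioc (0:ℝ) l) := by
      have h := (intervalIntegrable_iff_integrableOn_Ioc_of_le hl0.le).mp
        (intervalIntegral.intervalIntegrable_rpow' (r := 1-α) (by linarith))
      exact h.const_mul α
    have hle : (∫ y in Ioc (0:ℝ) l, gfun α y) ≤ ∫ y in Ioc (0:ℝ) l, α * y ^ (1-α) := by
      apply setIntegral_mono_on (hgint.mono_set Ioc_subset_Ioi_self) hint2 measurableSet_Ioc
      intro y hy
      have hy0 : (0:ℝ) < y := hy.1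
      have hy1 : y ≤ 1 := le_trans hy.2 hl1
      have hq : Real.exp (-y) - 1 + y ≤ y ^ 2 := by
        have hb := Real.abs_exp_sub_one_sub_id_le (x := -y)
          (by rw [abs_neg, abs_of_nonneg hy0.le]; exact hy1)
        rw [abs_le] at hb; nlinarith [hb.2]
      have hrn : (0:ℝ) ≤ α * y ^ (-α-1) := by
        have := Real.rpow_nonneg hy0.le (-α-1); positivity
      have hyy : y ^ 2 * (α * y ^ (-α-1)) = α * y ^ (1-α) := by
        rw [← Real.rpow_natCast y 2, ← mul_assoc, mul_comm ((y:ℝ) ^ ((2:ℕ):ℝ)) α, mul_assoc,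
          ← Real.rpow_add hy0, show ((2:ℕ):ℝ) + (-α-1) = 1-α by push_cast; ring]
      calc gfun α y ≤ y ^ 2 * (α * y ^ (-α-1)) :=
            mul_le_mul_of_nonneg_right hq hrn
        _ = α * y ^ (1-α) := hyy
    have hval : ∫ y in Ioc (0:ℝ) l, α * y ^ (1-α) = α * (l ^ (2-α) / (2-α)) := by
      rw [← intervalIntegral.integral_of_le hl0.le, intervalIntegral.integral_const_mul,
        integral_rpow (Or.inl (by linarith : (-1:ℝ) < 1-α)),
        show (1-α+1:ℝ) = 2-α by ring, Real.zero_rpow (by intro h; linarith : (2:ℝ)-α ≠ 0),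
        sub_zero]
    linarith [hle, hval.le, hval.ge]

lemma pow2_littleO {α : ℝ} (hα1 : 1 < α) (hα2 : α < 2) :
    (fun l : ℝ => l ^ (2:ℝ)) =o[𝓝[>] (0:ℝ)] fun l : ℝ => l ^ α := by
  rw [Asymptotics.isLittleO_iff]
  intro c hc
  have ht : Tendsto (fun l : ℝ => l ^ (2-α)) (𝓝[>] (0:ℝ)) (𝓝 0) := by
    have hcont : ContinuousAt (fun l : ℝ => l ^ (2-α)) 0 :=
      Real.continuousAt_rpow_const 0 (2-α) (Or.inr (by linarith))
    have := hcont.tendsto.mono_left (nhdsWithin_le_nhds (s := Ioi (0:ℝ)))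
    rwa [Real.zero_rpow (by intro h; linarith : (2:ℝ)-α ≠ 0)] at this
  filter_upwards [self_mem_nhdsWithin, ht.eventually (eventually_le_nhds hc)] with l hl0 hle
  have hl0' : (0:ℝ) < l := hl0
  rw [Real.norm_eq_abs, Real.norm_eq_abs, abs_of_nonneg (Real.rpow_nonneg hl0'.le _),
    abs_of_nonneg (Real.rpow_nonneg hl0'.le _)]
  calc l ^ (2:ℝ) = l ^ α * l ^ (2-α) := by
        rw [← Real.rpow_add hl0', show α + (2-α) = (2:ℝ) by ring]
    _ ≤ l ^ α * c := mul_le_mul_of_nonneg_left hle (Real.rpow_nonneg hl0'.le _)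
    _ = c * l ^ α := mul_comm _ _

/-- For `X` Pareto(α) with `α ∈ (1,2)` and `μ = α/(α-1)`,
`E(e^{-λX}) = 1 - μλ - Γ(1-α)λ^α + o(λ^α)` as `λ → 0⁺`. -/
theorem pareto_laplace_transform_asymptotic_one_two (α : ℝ) (hα1 : 1 < α) (hα2 : α < 2) :
    (fun l : ℝ =>
        (∫ x in Ioi (1 : ℝ), Real.exp (-(l * x)) * (α * x ^ (-(α + 1)))) -
          (1 - (α / (α - 1)) * l - Gamma (1 - α) * l ^ α)) =o[𝓝[>] (0 : ℝ)]
      fun l : ℝ => l ^ α := by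
  have i2 := int2 hα1 hα2
  have i3 := int3 hα1 hα2
  have hA := keyA hα1 hα2 i2
  have hB := keyB hα1 hα2 i2 i3 hA
  have hgint := gfun_int hα1 hα2 i3
  have hev : ∀ᶠ l in 𝓝[>] (0:ℝ),
      ((∫ x in Ioi (1:ℝ), Real.exp (-(l * x)) * (α * x ^ (-(α + 1)))) -
        (1 - (α / (α - 1)) * l - Real.Gamma (1 - α) * l ^ α)) =
        -(l ^ α * ∫ y in Ioc (0:ℝ) l, gfun α y) := by
    filter_upwards [self_mem_nhdsWithin] with l hl
    exact main_eq hα1 hα2 i3 hB hl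
  have hO : (fun l : ℝ => -(l ^ α * ∫ y in Ioc (0:ℝ) l, gfun α y)) =O[𝓝[>] (0:ℝ)]
      fun l : ℝ => l ^ (2:ℝ) := by
    rw [Asymptotics.isBigO_iff]
    refine ⟨α / (2-α), ?_⟩
    filter_upwards [Ioc_mem_nhdsGT zero_lt_one] with l hl
    obtain ⟨h1, h2⟩ := Rl_bound hα1 hα2 hgint hl.1 hl.2
    have hl0 : (0:ℝ) < l := hl.1
    have hra := Real.rpow_nonneg hl0.le α
    have hpow : l ^ α * l ^ (2-α) = l ^ (2:ℝ) := by
      rw [← Real.rpow_add hl0, show α + (2-α) = (2:ℝ) by ring]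
    rw [Real.norm_eq_abs, Real.norm_eq_abs, abs_neg, abs_of_nonneg (mul_nonneg hra h1),
      abs_of_nonneg (Real.rpow_nonneg hl0.le _)]
    calc l ^ α * ∫ y in Ioc (0:ℝ) l, gfun α y ≤ l ^ α * (α * (l ^ (2-α) / (2-α))) :=
          mul_le_mul_of_nonneg_left h2 hra
      _ = α / (2-α) * (l ^ α * l ^ (2-α)) := by ring
      _ = α / (2-α) * l ^ (2:ℝ) := by rw [hpow]
  have hev' : (fun l : ℝ =>
      (∫ x in Ioi (1:ℝ), Real.exp (-(l * x)) * (α * x ^ (-(α + 1)))) -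
        (1 - (α / (α - 1)) * l - Real.Gamma (1 - α) * l ^ α)) =ᶠ[𝓝[>] (0:ℝ)]
      (fun l : ℝ => -(l ^ α * ∫ y in Ioc (0:ℝ) l, gfun α y)) := hev
  exact (hO.trans_isLittleO (pow2_littleO hα1 hα2)).congr' hev'.symm EventuallyEq.rfl
end

section
/- For α ∈ (0,1) and β < α, the transition probabilities P_{i,j} = (i!/j!) α^{j-1} (Γ(1-β)/Γ(1-β/α)) (Γ(j-β/α)/Γ(i-β)) Σ*_{i₁+...+i_j=i, i_l≥1} Π_{l=1}^j Γ(i_l-α)/(Γ(1-α) i_l!) satisfy Σ_{j=1}^i P_{i,j} = 1 for every i ≥ 1. -/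
open Real Finset

/-- Sum over compositions of `i` into `j` positive parts of products of `g` over the parts. -/
noncomputable def starSum (j i : ℕ) (g : ℕ → ℝ) : ℝ :=
  ∑ f ∈ (Finset.Nat.antidiagonalTuple j i).filter (fun f => ∀ l, 0 < f l),
    ∏ l, g (f l)

/-- Transition probabilities (P4) of the discrete Poisson-Dirichlet(α,-β) coalescent. -/
noncomputable def PDtrans (α β : ℝ) (i j : ℕ) : ℝ :=
  ((i.factorial : ℝ) / (j.factorial : ℝ)) * α ^ (j - 1) *
    (Gamma (1 - β) / Gamma (1 - β / α)) * (Gamma ((j : ℝ) - β / α) / Gamma ((i : ℝ) - β)) *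
    starSum j i (fun m => Gamma ((m : ℝ) - α) / (Gamma (1 - α) * (m.factorial : ℝ)))

namespace PDaux

noncomputable def g (α : ℝ) : ℕ → ℝ :=
  fun m => Real.Gamma ((m : ℝ) - α) / (Real.Gamma (1 - α) * (m.factorial : ℝ))

lemma g_one {α : ℝ} (hα1 : α < 1) : g α 1 = 1 := by
  have h : Real.Gamma (1 - α) ≠ 0 := (Real.Gamma_pos_of_pos (by linarith)).ne'
  simp [g, h]

lemma g_rec {α : ℝ} (hα0 : 0 < α) (hα1 : α < 1) (m : ℕ) :
    ((m : ℝ) + 1) * g α (m + 1) = ((m : ℝ) - α) * g α m := by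
  have hne : (m : ℝ) - α ≠ 0 := by
    cases m with
    | zero => simpa using hα0.ne'
    | succ k =>
        have hk : (0 : ℝ) ≤ (k : ℝ) := Nat.cast_nonneg k
        have : (0 : ℝ) < ((k + 1 : ℕ) : ℝ) - α := by push_cast; linarith
        exact this.ne'
  have hD : Real.Gamma (1 - α) ≠ 0 := (Real.Gamma_pos_of_pos (by linarith)).ne'
  have hf : (m.factorial : ℝ) ≠ 0 := Nat.cast_ne_zero.2 m.factorial_ne_zero
  have hcast : ((m + 1 : ℕ) : ℝ) - α = ((m : ℝ) - α) + 1 := by push_cast; ring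
  unfold g
  rw [hcast, Real.Gamma_add_one hne, Nat.factorial_succ]
  push_cast
  have h1 : (m : ℝ) + 1 ≠ 0 := by positivity
  field_simp

def PDs (j i : ℕ) : Finset (Fin j → ℕ) :=
  (Finset.Nat.antidiagonalTuple j i).filter (fun f => ∀ l, 0 < f l)

lemma mem_PDs {j i : ℕ} {f : Fin j → ℕ} :
    f ∈ PDs j i ↔ (∑ m, f m = i ∧ ∀ l, 0 < f l) := by
  simp [PDs, Finset.Nat.mem_antidiagonalTuple]

lemma starSum_eq (j i : ℕ) (G : ℕ → ℝ) :
    starSum j i G = ∑ f ∈ PDs j i, ∏ l, G (f l) := rfl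

lemma PDs_empty_of_lt {j i : ℕ} (h : i < j) : PDs j i = ∅ := by
  ext f
  simp only [mem_PDs, Finset.notMem_empty, iff_false, not_and]
  intro hs hp
  have : j ≤ i := by
    calc j = ∑ _m : Fin j, 1 := by simp
    _ ≤ ∑ m, f m := Finset.sum_le_sum fun m _ => hp m
    _ = i := hs
  omega

lemma starSum_of_lt {j i : ℕ} (h : i < j) (G : ℕ → ℝ) : starSum j i G = 0 := by
  rw [starSum_eq, PDs_empty_of_lt h, Finset.sum_empty]

lemma starSum_zero_left {i : ℕ} (hi : 1 ≤ i) (G : ℕ → ℝ) : starSum 0 i G = 0 := by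
  obtain ⟨n, rfl⟩ := Nat.exists_eq_succ_of_ne_zero (by omega : i ≠ 0)
  simp [starSum, Finset.Nat.antidiagonalTuple_zero_succ]

lemma starSum_one {i : ℕ} (hi : 1 ≤ i) (G : ℕ → ℝ) : starSum 1 i G = G i := by
  rw [starSum, Finset.Nat.antidiagonalTuple_one, Finset.filter_singleton, if_pos]
  · simp
  · intro l
    simpa [Fin.eq_zero l] using (show 0 < i by omega)


lemma key_split {α : ℝ} (hα0 : 0 < α) (hα1 : α < 1) (j i : ℕ) (l : Fin (j + 1)) :
    (∑ f ∈ PDs (j + 1) (i + 1), (f l : ℝ) * ∏ m, g α (f m))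
      = (∑ f ∈ PDs (j + 1) i, ((f l : ℝ) - α) * ∏ m, g α (f m))
        + starSum j i (g α) := by
  classical
  rw [← Finset.sum_filter_add_sum_filter_not (PDs (j + 1) (i + 1)) (fun f => 2 ≤ f l)]
  congr 1
  · -- f l ≥ 2 part
    refine Finset.sum_nbij' (fun f => Function.update f l (f l - 1))
      (fun f => Function.update f l (f l + 1)) ?_ ?_ ?_ ?_ ?_
    · intro f hf
      simp only [Finset.mem_filter, mem_PDs] at hf
      obtain ⟨⟨hs, hp⟩, h2⟩ := hf
      rw [mem_PDs]
      constructor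
      · have he : f l + ∑ m ∈ Finset.univ.erase l, f m = i + 1 := by
          rw [Finset.add_sum_erase _ f (Finset.mem_univ l), hs]
        rw [Finset.sum_update_of_mem (Finset.mem_univ l), ← Finset.erase_eq]
        omega
      · intro m
        rcases eq_or_ne m l with rfl | hml
        · rw [Function.update_self]; omega
        · rw [Function.update_of_ne hml]; exact hp m
    · intro f hf
      rw [mem_PDs] at hf
      obtain ⟨hs, hp⟩ := hf
      simp only [Finset.mem_filter, mem_PDs]
      refine ⟨⟨?_, ?_⟩, ?_⟩
      · have he : f l + ∑ m ∈ Finset.univ.erase l, f m = i := by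
          rw [Finset.add_sum_erase _ f (Finset.mem_univ l), hs]
        rw [Finset.sum_update_of_mem (Finset.mem_univ l), ← Finset.erase_eq]
        omega
      · intro m
        rcases eq_or_ne m l with rfl | hml
        · rw [Function.update_self]; omega
        · rw [Function.update_of_ne hml]; exact hp m
      · rw [Function.update_self]
        have := hp l; omega
    · intro f hf
      simp only [Finset.mem_filter, mem_PDs] at hf
      obtain ⟨⟨hs, hp⟩, h2⟩ := hf
      simp only [Function.update_self, Function.update_idem]
      have : f l - 1 + 1 = f l := by omega
      rw [this, Function.update_eq_self]
    · intro f hf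
      simp only [Function.update_self, Function.update_idem]
      have : f l + 1 - 1 = f l := by omega
      rw [this, Function.update_eq_self]
    · intro f hf
      simp only [Finset.mem_filter, mem_PDs] at hf
      obtain ⟨⟨hs, hp⟩, h2⟩ := hf
      rw [Function.update_self]
      rw [Fin.prod_univ_succAbove (fun m => g α (f m)) l,
        Fin.prod_univ_succAbove (fun m => g α (Function.update f l (f l - 1) m)) l]
      have hrw : ∀ m : Fin j, g α (Function.update f l (f l - 1) (l.succAbove m)) =
          g α (f (l.succAbove m)) := by
        intro m; rw [Function.update_of_ne (Fin.succAbove_ne l m)]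
      simp only [hrw, Function.update_self]
      have h1 : 1 ≤ f l := by omega
      have e1 : f l - 1 + 1 = f l := by omega
      have hg := g_rec hα0 hα1 (f l - 1)
      rw [e1] at hg
      have e2 : ((f l - 1 : ℕ) : ℝ) + 1 = (f l : ℝ) := by
        rw [Nat.cast_sub h1, Nat.cast_one]; ring
      rw [e2] at hg
      rw [← mul_assoc, ← mul_assoc, hg]
  · -- f l = 1 part
    rw [starSum_eq]
    refine Finset.sum_nbij' (fun f => l.removeNth f) (fun f' => l.insertNth 1 f') ?_ ?_ ?_ ?_ ?_
    · intro f hf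
      simp only [Finset.mem_filter, mem_PDs, not_le] at hf
      obtain ⟨⟨hs, hp⟩, h2⟩ := hf
      rw [mem_PDs]
      constructor
      · have := Fin.sum_univ_succAbove f l
        rw [hs] at this
        have hfl : f l = 1 := by have := hp l; omega
        rw [hfl] at this
        simp only [Fin.removeNth]
        omega
      · intro m; exact hp _
    · intro f' hf'
      rw [mem_PDs] at hf'
      obtain ⟨hs, hp⟩ := hf'
      simp only [Finset.mem_filter, mem_PDs, not_le]
      refine ⟨⟨?_, ?_⟩, ?_⟩
      · rw [Fin.sum_univ_succAbove (l.insertNth 1 f') l]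
        simp [hs, add_comm]
      · rw [Fin.forall_iff_succAbove l]
        constructor
        · simp
        · intro m; simpa using hp m
      · simp
    · intro f hf
      simp only [Finset.mem_filter, mem_PDs, not_le] at hf
      obtain ⟨⟨hs, hp⟩, h2⟩ := hf
      have hfl : f l = 1 := by have := hp l; omega
      rw [Fin.insertNth_removeNth]
      ext m
      rcases eq_or_ne m l with rfl | h
      · simp [hfl]
      · simp [Function.update_of_ne h]
    · intro f' _
      ext m
      simp [Fin.removeNth]
    · intro f hf
      simp only [Finset.mem_filter, mem_PDs, not_le] at hf
      obtain ⟨⟨hs, hp⟩, h2⟩ := hf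
      have hfl : f l = 1 := by have := hp l; omega
      rw [Fin.prod_univ_succAbove (fun m => g α (f m)) l, hfl, g_one hα1]
      simp [Fin.removeNth]

lemma starSum_rec {α : ℝ} (hα0 : 0 < α) (hα1 : α < 1) (j i : ℕ) :
    ((i : ℝ) + 1) * starSum (j + 1) (i + 1) (g α)
      = ((i : ℝ) - (j + 1) * α) * starSum (j + 1) i (g α)
        + (j + 1) * starSum j i (g α) := by
  classical
  have hL : ∑ l : Fin (j + 1), ∑ f ∈ PDs (j + 1) (i + 1), (f l : ℝ) * ∏ m, g α (f m)
      = ((i : ℝ) + 1) * starSum (j + 1) (i + 1) (g α) := by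
    rw [Finset.sum_comm, starSum_eq, Finset.mul_sum]
    refine Finset.sum_congr rfl fun f hf => ?_
    rw [← Finset.sum_mul]
    congr 1
    have hs := (mem_PDs.1 hf).1
    rw [← Nat.cast_sum, hs]
    push_cast; ring
  calc ((i : ℝ) + 1) * starSum (j + 1) (i + 1) (g α)
      = ∑ l : Fin (j + 1), ∑ f ∈ PDs (j + 1) (i + 1), (f l : ℝ) * ∏ m, g α (f m) := hL.symm
    _ = ∑ l : Fin (j + 1),
          ((∑ f ∈ PDs (j + 1) i, ((f l : ℝ) - α) * ∏ m, g α (f m)) + starSum j i (g α)) :=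
        Finset.sum_congr rfl fun l _ => key_split hα0 hα1 j i l
    _ = (∑ l : Fin (j + 1), ∑ f ∈ PDs (j + 1) i, ((f l : ℝ) - α) * ∏ m, g α (f m))
          + (j + 1) * starSum j i (g α) := by
        rw [Finset.sum_add_distrib]
        congr 1
        rw [Finset.sum_const, Finset.card_univ, Fintype.card_fin, nsmul_eq_mul]
        push_cast; ring
    _ = ((i : ℝ) - (j + 1) * α) * starSum (j + 1) i (g α) + (j + 1) * starSum j i (g α) := by
        congr 1
        rw [Finset.sum_comm, starSum_eq, Finset.mul_sum]
        refine Finset.sum_congr rfl fun f hf => ?_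
        rw [← Finset.sum_mul]
        congr 1
        have hs := (mem_PDs.1 hf).1
        have : ∑ l : Fin (j + 1), ((f l : ℝ) - α) = (∑ l, (f l : ℝ)) - (j + 1) * α := by
          rw [Finset.sum_sub_distrib, Finset.sum_const, Finset.card_univ, Fintype.card_fin,
            nsmul_eq_mul]
          push_cast; ring
        rw [this, ← Nat.cast_sum, hs]


lemma PDtrans_eq (α β : ℝ) (a b : ℕ) : PDtrans α β a b
    = ((a.factorial : ℝ) / (b.factorial : ℝ)) * α ^ (b - 1) *
        (Real.Gamma (1 - β) / Real.Gamma (1 - β / α)) *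
        (Real.Gamma ((b : ℝ) - β / α) / Real.Gamma ((a : ℝ) - β)) * starSum b a (g α) := rfl

lemma PD_step {α β : ℝ} (hα0 : 0 < α) (hα1 : α < 1) (hβ : β < α) {i : ℕ} (k : ℕ)
    (hi : 1 ≤ i) :
    PDtrans α β (i + 1) (k + 1)
      = (((i : ℝ) - (k + 1) * α) / ((i : ℝ) - β)) * PDtrans α β i (k + 1)
        + (((k : ℝ) * α - β) / ((i : ℝ) - β)) * PDtrans α β i k := by
  have hβ1 : β < 1 := hβ.trans hα1
  have hi1 : (1 : ℝ) ≤ (i : ℝ) := by exact_mod_cast hi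
  have hiβ : (0 : ℝ) < (i : ℝ) - β := by linarith
  have hGipos : (0 : ℝ) < Real.Gamma ((i : ℝ) - β) := Real.Gamma_pos_of_pos hiβ
  have hGi : Real.Gamma ((i : ℝ) + 1 - β) = ((i : ℝ) - β) * Real.Gamma ((i : ℝ) - β) := by
    have h : (i : ℝ) + 1 - β = ((i : ℝ) - β) + 1 := by ring
    rw [h, Real.Gamma_add_one hiβ.ne']
  have hβα : β / α < 1 := (div_lt_one hα0).2 hβ
  have hG1a : (0 : ℝ) < Real.Gamma (1 - β / α) := Real.Gamma_pos_of_pos (by linarith)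
  have hne : ((i : ℝ) + 1) ≠ 0 := by positivity
  have hrec := starSum_rec hα0 hα1 k i
  have hSS : starSum (k + 1) (i + 1) (g α)
      = (((i : ℝ) - (k + 1) * α) * starSum (k + 1) i (g α)
          + (k + 1) * starSum k i (g α)) / ((i : ℝ) + 1) := by
    rw [eq_div_iff hne]; linarith [hrec]
  have hfacne : ∀ n : ℕ, ((n.factorial : ℕ) : ℝ) ≠ 0 :=
    fun n => Nat.cast_ne_zero.2 n.factorial_ne_zero
  have hf1 : (((i + 1).factorial : ℕ) : ℝ) = ((i : ℝ) + 1) * ((i.factorial : ℕ) : ℝ) := by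
    rw [Nat.factorial_succ]; push_cast; ring
  rcases Nat.eq_zero_or_pos k with rfl | hk
  · -- k = 0
    rw [PDtrans_eq, PDtrans_eq, PDtrans_eq, hSS, starSum_zero_left hi]
    push_cast
    rw [hGi, hf1]
    set G1 := Real.Gamma (1 - β) with hG1def
    set G2 := Real.Gamma (1 - β / α) with hG2def
    set G3 := Real.Gamma ((i : ℝ) - β) with hG3def
    set GA := Real.Gamma ((0 : ℝ) + 1 - β / α) with hGAdef
    set S1 := starSum (0 + 1) i (g α) with hS1def
    set F := ((i.factorial : ℕ) : ℝ) with hFdef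
    have hFne : F ≠ 0 := hfacne i
    have hG3ne : G3 ≠ 0 := hGipos.ne'
    have hiβne : (i : ℝ) - β ≠ 0 := hiβ.ne'
    field_simp
    ring
  · -- k ≥ 1
    obtain ⟨m, rfl⟩ := Nat.exists_eq_succ_of_ne_zero (by omega : k ≠ 0)
    have hkβα : (0 : ℝ) < ((m : ℝ) + 1) - β / α := by
      have : (0 : ℝ) ≤ (m : ℝ) := Nat.cast_nonneg m
      linarith
    have hGk : Real.Gamma ((m : ℝ) + 1 + 1 - β / α)
        = (((m : ℝ) + 1) - β / α) * Real.Gamma ((m : ℝ) + 1 - β / α) := by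
      have h : (m : ℝ) + 1 + 1 - β / α = (((m : ℝ) + 1) - β / α) + 1 := by ring
      rw [h, Real.Gamma_add_one hkβα.ne']
    have hGkpos : (0 : ℝ) < Real.Gamma ((m : ℝ) + 1 - β / α) := Real.Gamma_pos_of_pos hkβα
    have hf2 : (((m + 1 + 1).factorial : ℕ) : ℝ)
        = ((m : ℝ) + 2) * ((m : ℝ) + 1) * ((m.factorial : ℕ) : ℝ) := by
      rw [Nat.factorial_succ, Nat.factorial_succ]; push_cast; ring
    have hf3 : (((m + 1).factorial : ℕ) : ℝ) = ((m : ℝ) + 1) * ((m.factorial : ℕ) : ℝ) := by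
      rw [Nat.factorial_succ]; push_cast; ring
    rw [PDtrans_eq, PDtrans_eq, PDtrans_eq, hSS]
    have e1 : (m + 1 + 1) - 1 = m + 1 := rfl
    have e2 : (m + 1) - 1 = m := rfl
    rw [e1, e2, hf1, hf2, hf3]
    push_cast
    rw [hGi, hGk]
    set G1 := Real.Gamma (1 - β) with hG1def
    set G2 := Real.Gamma (1 - β / α) with hG2def
    set G3 := Real.Gamma ((i : ℝ) - β) with hG3def
    set G4 := Real.Gamma ((m : ℝ) + 1 - β / α) with hG4def
    set S1 := starSum (m + 1 + 1) i (g α) with hS1def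
    set S0 := starSum (m + 1) i (g α) with hS0def
    set F := ((m.factorial : ℕ) : ℝ) with hFdef
    set FI := ((i.factorial : ℕ) : ℝ) with hFIdef
    have hFne : F ≠ 0 := hfacne m
    have hFIne : FI ≠ 0 := hfacne i
    have hG3ne : G3 ≠ 0 := hGipos.ne'
    have hiβne : (i : ℝ) - β ≠ 0 := hiβ.ne'
    have hα : α ≠ 0 := hα0.ne'
    have hm2 : ((m : ℝ) + 2) ≠ 0 := by positivity
    have hm1 : ((m : ℝ) + 1) ≠ 0 := by positivity
    field_simp
    ring

end PDaux

open PDaux in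
/-- For `α ∈ (0,1)` and `β < α`, the transition probabilities (P4) of the
Poisson-Dirichlet(α,-β) coalescent are a stochastic matrix: `Σ_{j=1}^i P_{i,j} = 1`. -/
theorem PD_transition_row_sum_one (α β : ℝ) (hα0 : 0 < α) (hα1 : α < 1) (hβ : β < α)
    (i : ℕ) (hi : 1 ≤ i) :
    ∑ j ∈ Finset.Icc 1 i, PDtrans α β i j = 1 := by
  have hβ1 : β < 1 := hβ.trans hα1
  have hβα : β / α < 1 := (div_lt_one hα0).2 hβ
  have hIcc : ∀ (n : ℕ) (F : ℕ → ℝ),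
      ∑ j ∈ Finset.Icc 1 n, F j = ∑ k ∈ Finset.range n, F (k + 1) := by
    intro n F
    rw [← Finset.Ico_add_one_right_eq_Icc, Finset.sum_Ico_eq_sum_range]
    simp only [Nat.add_sub_cancel]
    exact Finset.sum_congr rfl fun k _ => by rw [add_comm]
  induction i, hi using Nat.le_induction with
  | base =>
    rw [Finset.Icc_self, Finset.sum_singleton, PDtrans_eq, starSum_one le_rfl, g_one hα1]
    have h1 : (0 : ℝ) < Real.Gamma (1 - β) := Real.Gamma_pos_of_pos (by linarith)
    have h2 : (0 : ℝ) < Real.Gamma (1 - β / α) := Real.Gamma_pos_of_pos (by linarith)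
    norm_num
    rw [div_mul_div_comm, mul_comm (Real.Gamma (1 - β / α)) (Real.Gamma (1 - β))]
    exact div_self (mul_ne_zero h1.ne' h2.ne')
  | succ i hi IH =>
    have hi1 : (1 : ℝ) ≤ (i : ℝ) := by exact_mod_cast hi
    have hiβ : ((i : ℝ) - β) ≠ 0 := by linarith
    rw [hIcc]
    rw [Finset.sum_congr rfl fun k (_ : k ∈ Finset.range (i + 1)) => PD_step hα0 hα1 hβ k hi]
    rw [Finset.sum_add_distrib, Finset.sum_range_succ, Finset.sum_range_succ']
    have hP0 : PDtrans α β i 0 = 0 := by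
      rw [PDtrans_eq, starSum_zero_left hi]; ring
    have hPtop : PDtrans α β i (i + 1) = 0 := by
      rw [PDtrans_eq, starSum_of_lt (by omega)]; ring
    rw [hP0, hPtop, mul_zero, mul_zero, add_zero, add_zero, ← Finset.sum_add_distrib]
    have hterm : ∀ k ∈ Finset.range i,
        (((i : ℝ) - (k + 1) * α) / ((i : ℝ) - β)) * PDtrans α β i (k + 1)
          + ((((k + 1 : ℕ) : ℝ) * α - β) / ((i : ℝ) - β)) * PDtrans α β i (k + 1)
          = PDtrans α β i (k + 1) := by
      intro k _
      push_cast
      rw [← add_mul, ← add_div]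
      have : ((i : ℝ) - ((k : ℝ) + 1) * α + (((k : ℝ) + 1) * α - β)) = (i : ℝ) - β := by ring
      rw [this, div_self hiβ, one_mul]
    rw [Finset.sum_congr rfl hterm, ← hIcc]
    exact IH
end

section
/- For the limiting case α = 0 with β < 0, the Poisson-Dirichlet(0,-β) coalescent transition probabilities are P_{i,j} = ((-β)^j Γ(-β)/Γ(i-β)) s_{i,j}, where s_{i,j} = (i!/j!) Σ*_{i₁+...+i_j=i} Π_l (1/i_l) are the unsigned Stirling numbers of the first kind, and Σ_{j=1}^i P_{i,j} = 1. -/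
open Real Finset

/-- The unsigned Stirling numbers of the first kind:
`s_{i,j} = (i!/j!) Σ*_{i₁+...+i_j=i} Π_l 1/i_l` (sum over compositions into positive parts). -/
noncomputable def stirlingFirst (i j : ℕ) : ℝ :=
  ((i.factorial : ℝ) / (j.factorial : ℝ)) * starSum j i (fun m => 1 / (m : ℝ))

/-- Transition probabilities of the Poisson-Dirichlet(0,-β) coalescent:
`P_{i,j} = ((-β)^j Γ(-β)/Γ(i-β)) s_{i,j}`. -/
noncomputable def PDzeroTrans (β : ℝ) (i j : ℕ) : ℝ :=
  (-β) ^ j * Gamma (-β) / Gamma ((i : ℝ) - β) * stirlingFirst i j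

-- Auxiliary lemmas
lemma sum_tuple_succ (j i : ℕ) (g : ℕ → ℝ) :
    ∑ f ∈ Finset.Nat.antidiagonalTuple (j+1) i, ∏ l, g (f l)
    = ∑ p ∈ Finset.HasAntidiagonal.antidiagonal i, g p.1 *
        ∑ f ∈ Finset.Nat.antidiagonalTuple j p.2, ∏ l, g (f l) := by
  simp_rw [Finset.mul_sum]
  rw [Finset.sum_sigma']
  refine (Finset.sum_nbij' (i := fun x => Fin.cons x.1.1 x.2)
    (j := fun (f : Fin (j+1) → ℕ) => ⟨(f 0, ∑ l : Fin j, f l.succ), fun l => f l.succ⟩) ?_ ?_ ?_ ?_ ?_).symm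
  · rintro ⟨⟨a, b⟩, f⟩ h
    simp only [Finset.mem_sigma, Finset.HasAntidiagonal.mem_antidiagonal,
      Finset.Nat.mem_antidiagonalTuple] at h ⊢
    rw [Fin.sum_cons, h.2, h.1]
  · intro f hf
    simp only [Finset.Nat.mem_antidiagonalTuple, Fin.sum_univ_succ] at hf
    simp only [Finset.mem_sigma, Finset.HasAntidiagonal.mem_antidiagonal,
      Finset.Nat.mem_antidiagonalTuple]
    exact ⟨hf, trivial⟩
  · rintro ⟨⟨a, b⟩, f⟩ h
    simp only [Finset.mem_sigma, Finset.HasAntidiagonal.mem_antidiagonal,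
      Finset.Nat.mem_antidiagonalTuple] at h
    simp [h.2]
  · intro f hf
    simp only
    exact Fin.cons_self_tail f
  · rintro ⟨⟨a, b⟩, f⟩ h
    simp [Fin.prod_univ_succ]

noncomputable def Lser : PowerSeries ℝ := PowerSeries.mk fun m => (m : ℝ)⁻¹

noncomputable def Ufun (j i : ℕ) : ℝ :=
  ∑ f ∈ Finset.Nat.antidiagonalTuple j i, ∏ l, ((f l : ℝ))⁻¹

lemma Ufun_eq_coeff (j i : ℕ) : Ufun j i = PowerSeries.coeff i (Lser ^ j) := by
  induction j generalizing i with
  | zero =>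
    simp only [pow_zero, PowerSeries.coeff_one, Ufun]
    cases i with
    | zero => simp [Finset.Nat.antidiagonalTuple_zero_zero]
    | succ n => simp [Finset.Nat.antidiagonalTuple_zero_succ]
  | succ j ih =>
    rw [Ufun, sum_tuple_succ j i (fun m => (m:ℝ)⁻¹), pow_succ, mul_comm (Lser ^ j) Lser,
      PowerSeries.coeff_mul]
    refine Finset.sum_congr rfl fun p hp => ?_
    rw [← ih, Ufun, Lser, PowerSeries.coeff_mk]

lemma one_sub_X_mul_dL : (1 - PowerSeries.X) * (PowerSeries.derivative ℝ Lser) = 1 := by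
  ext n
  rw [sub_mul, one_mul, map_sub]
  cases n with
  | zero =>
    simp [PowerSeries.coeff_derivative, Lser]
  | succ n =>
    rw [PowerSeries.coeff_succ_X_mul, PowerSeries.coeff_derivative,
      PowerSeries.coeff_derivative, Lser, PowerSeries.coeff_mk,
      PowerSeries.coeff_mk, PowerSeries.coeff_one]
    have h1 : ((n : ℝ) + 1) ≠ 0 := by positivity
    have h2 : (((n + 1) : ℕ) + 1 : ℝ) ≠ 0 := by positivity
    push_cast at h2 ⊢
    rw [inv_mul_cancel₀ h2, inv_mul_cancel₀ h1]
    simp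

lemma U_rec (j i : ℕ) :
    (i + 1 : ℝ) * Ufun (j+1) (i+1) = i * Ufun (j+1) i + ((j:ℝ)+1) * Ufun j i := by
  have h : (1 - PowerSeries.X) * PowerSeries.derivative ℝ (Lser ^ (j+1))
      = (j+1 : ℕ) • Lser ^ j := by
    rw [Derivation.leibniz_pow, Nat.succ_sub_one, smul_eq_mul, mul_smul_comm,
      ← mul_assoc, mul_comm (1 - PowerSeries.X) (Lser ^ j), mul_assoc,
      one_sub_X_mul_dL, mul_one]
  have h2 := congrArg (PowerSeries.coeff i) h
  rw [sub_mul, one_mul, map_sub, map_nsmul, PowerSeries.coeff_derivative] at h2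
  have hX : PowerSeries.coeff i (PowerSeries.X * PowerSeries.derivative ℝ (Lser ^ (j+1)))
      = (i : ℝ) * Ufun (j+1) i := by
    cases i with
    | zero => simp
    | succ n =>
      rw [PowerSeries.coeff_succ_X_mul, PowerSeries.coeff_derivative, ← Ufun_eq_coeff]
      push_cast; ring
  rw [hX, ← Ufun_eq_coeff, ← Ufun_eq_coeff, nsmul_eq_mul] at h2
  push_cast at h2
  linarith

lemma Ufun_eq_zero_of_lt {j i : ℕ} (h : i < j) : Ufun j i = 0 := by
  refine Finset.sum_eq_zero fun f hf => ?_
  rw [Finset.Nat.mem_antidiagonalTuple] at hf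
  have : ∃ l, f l = 0 := by
    by_contra hc
    push_neg at hc
    have : j ≤ i := by
      calc j = ∑ _l : Fin j, 1 := by simp
        _ ≤ ∑ l, f l := Finset.sum_le_sum fun l _ => Nat.one_le_iff_ne_zero.2 (hc l)
        _ = i := hf
    omega
  obtain ⟨l, hl⟩ := this
  exact Finset.prod_eq_zero (Finset.mem_univ l) (by simp [hl])

lemma Ufun_zero_pos {i : ℕ} (hi : 1 ≤ i) : Ufun 0 i = 0 := by
  obtain ⟨n, rfl⟩ : ∃ n, i = n + 1 := ⟨i - 1, by omega⟩
  simp [Ufun, Finset.Nat.antidiagonalTuple_zero_succ]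

lemma Ufun_one_one : Ufun 1 1 = 1 := by
  simp [Ufun, Finset.Nat.antidiagonalTuple_one]

lemma key_identity (i : ℕ) (hi : 1 ≤ i) (x : ℝ) :
    ∑ j ∈ Finset.Icc 1 i, x ^ j * ((i.factorial : ℝ) / (j.factorial : ℝ)) * Ufun j i
      = ∏ k ∈ Finset.range i, (x + k) := by
  induction i, hi using Nat.le_induction with
  | base => simp [Ufun_one_one]
  | succ i hi ih =>
    have step : ∀ j ∈ Finset.Icc 1 (i+1),
        x ^ j * (((i+1).factorial : ℝ) / (j.factorial : ℝ)) * Ufun j (i+1)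
        = (i : ℝ) * (x ^ j * ((i.factorial : ℝ) / (j.factorial : ℝ)) * Ufun j i)
          + x * (x ^ (j-1) * ((i.factorial : ℝ) / ((j-1).factorial : ℝ)) * Ufun (j-1) i) := by
      intro j hj
      rw [Finset.mem_Icc] at hj
      obtain ⟨m, rfl⟩ : ∃ m, j = m + 1 := ⟨j - 1, by omega⟩
      have hrec := U_rec m i
      have hfac : (((m+1).factorial : ℝ)) = (m+1) * m.factorial := by
        push_cast [Nat.factorial_succ]; ring
      have hfac2 : (((i+1).factorial : ℝ)) = (i+1) * i.factorial := by
        push_cast [Nat.factorial_succ]; ring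
      have hm : ((m.factorial : ℝ)) ≠ 0 := Nat.cast_ne_zero.2 m.factorial_ne_zero
      have hm1 : ((m : ℝ) + 1) ≠ 0 := by positivity
      have hi1 : ((i : ℝ) + 1) ≠ 0 := by positivity
      have hA : Ufun (m+1) (i+1)
          = ((i : ℝ) * Ufun (m+1) i + ((m:ℝ)+1) * Ufun m i) / ((i:ℝ)+1) := by
        field_simp
        push_cast at hrec ⊢
        linarith
      simp only [Nat.add_sub_cancel]
      rw [hA, hfac, hfac2]
      field_simp
      ring
    rw [Finset.sum_congr rfl step, Finset.sum_add_distrib, ← Finset.mul_sum, ← Finset.mul_sum]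
    rw [Finset.sum_Icc_succ_top (by omega : 1 ≤ i + 1), Ufun_eq_zero_of_lt (by omega)]
    simp only [mul_zero, add_zero]
    rw [ih]
    have reidx : ∑ j ∈ Finset.Icc 1 (i+1),
        x ^ (j-1) * ((i.factorial : ℝ) / ((j-1).factorial : ℝ)) * Ufun (j-1) i
        = ∑ j ∈ Finset.Icc 0 i, x ^ j * ((i.factorial : ℝ) / (j.factorial : ℝ)) * Ufun j i := by
      refine Finset.sum_nbij' (fun j => j - 1) (fun j => j + 1) ?_ ?_ ?_ ?_ ?_
      · intro a ha; simp_all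
      · intro a ha; simp_all
      · intro a ha; simp_all
      · intro a ha; simp_all
      · intro a ha; rfl
    rw [reidx, show Finset.Icc 0 i = insert 0 (Finset.Icc 1 i) by ext a; simp; omega,
      Finset.sum_insert (by simp), Ufun_zero_pos hi, ih]
    rw [Finset.prod_range_succ]
    ring

lemma Gamma_prod (x : ℝ) (hx : 0 < x) (i : ℕ) :
    Real.Gamma (x + i) = Real.Gamma x * ∏ k ∈ Finset.range i, (x + k) := by
  induction i with
  | zero => simp
  | succ n ihn =>
    have hne : x + (n : ℝ) ≠ 0 := by positivity
    have : x + ((n : ℕ) + 1 : ℕ) = (x + n) + 1 := by push_cast; ring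
    rw [this, Real.Gamma_add_one hne, ihn, Finset.prod_range_succ]
    ring

lemma starSum_eq_Ufun (j i : ℕ) : starSum j i (fun m => 1 / (m : ℝ)) = Ufun j i := by
  rw [starSum, Ufun]
  simp_rw [one_div]
  refine Finset.sum_filter_of_ne fun f hf hne => ?_
  intro l
  by_contra hc
  exact hne (Finset.prod_eq_zero (Finset.mem_univ l) (by simp [Nat.eq_zero_of_not_pos hc]))

/-- For `β < 0`, the Poisson-Dirichlet(0,-β) transition probabilities
`P_{i,j} = ((-β)^j Γ(-β)/Γ(i-β)) s_{i,j}` sum to one: `Σ_{j=1}^i P_{i,j} = 1`. -/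
theorem PD_zero_transition_row_sum_one (β : ℝ) (hβ : β < 0) (i : ℕ) (hi : 1 ≤ i) :
    ∑ j ∈ Finset.Icc 1 i, PDzeroTrans β i j = 1 := by
  have hx : (0:ℝ) < -β := by linarith
  have hG : Gamma ((i : ℝ) - β) = Gamma (-β) * ∏ k ∈ Finset.range i, (-β + k) := by
    rw [show (i : ℝ) - β = -β + i by ring]
    exact Gamma_prod (-β) hx i
  have hsum : ∑ j ∈ Finset.Icc 1 i, PDzeroTrans β i j
      = Gamma (-β) / Gamma ((i : ℝ) - β) *
        ∑ j ∈ Finset.Icc 1 i,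
          (-β) ^ j * ((i.factorial : ℝ) / (j.factorial : ℝ)) * Ufun j i := by
    rw [Finset.mul_sum]
    refine Finset.sum_congr rfl fun j hj => ?_
    rw [PDzeroTrans, stirlingFirst, starSum_eq_Ufun]
    ring
  rw [hsum, key_identity i hi (-β), hG]
  have h1 : Gamma (-β) ≠ 0 := ne_of_gt (Real.Gamma_pos_of_pos hx)
  have h2 : (∏ k ∈ Finset.range i, (-β + (k:ℝ))) ≠ 0 := by
    refine ne_of_gt (Finset.prod_pos fun k _ => ?_)
    positivity
  field_simp
end

section
/- For X Pareto(α) with α ∈ (0,1), integer i ≥ 1, and λ → 0⁺, the moment E(X^i e^{-λX}) satisfies E(X^i e^{-λX}) ~ α Γ(i-α) λ^{α-i}. -/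
open MeasureTheory Set Real Asymptotics Filter Topology

/-- For `X` Pareto(α), `α ∈ (0,1)`, integer `i ≥ 1`:
`E(X^i e^{-λX}) ~ α Γ(i-α) λ^(α-i)` as `λ → 0⁺`. -/
theorem pareto_moment_laplace_asymptotic (α : ℝ) (hα0 : 0 < α) (hα1 : α < 1)
    (i : ℕ) (hi : 1 ≤ i) :
    (fun l : ℝ =>
        ∫ x in Ioi (1 : ℝ), x ^ i * Real.exp (-(l * x)) * (α * x ^ (-(α + 1)))) ~[𝓝[>] (0 : ℝ)]
      fun l : ℝ => α * Gamma ((i : ℝ) - α) * l ^ (α - i) := by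
  set s : ℝ := (i : ℝ) - α with hsdef
  have hi1 : (1 : ℝ) ≤ (i : ℝ) := by exact_mod_cast hi
  have hs0 : 0 < s := by simp only [hsdef]; linarith
  have hΓ : 0 < Gamma s := Gamma_pos_of_pos hs0
  -- key decomposition for l > 0
  have key : ∀ l : ℝ, 0 < l →
      (∫ x in Ioi (1 : ℝ), x ^ i * Real.exp (-(l * x)) * (α * x ^ (-(α + 1))))
        = α * Gamma s * l ^ (α - i)
          - α * ∫ x in Ioc (0 : ℝ) 1, x ^ (s - 1) * Real.exp (-(l * x)) := by
    intro l hl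
    set F : ℝ → ℝ := fun x => x ^ (s - 1) * Real.exp (-(l * x)) with hF
    have hint : IntegrableOn F (Ioi 0) := by
      have h := integrableOn_rpow_mul_exp_neg_mul_rpow (p := 1)
        (by linarith : (-1 : ℝ) < s - 1) one_pos hl
      refine h.congr_fun (fun x hx => ?_) measurableSet_Ioi
      dsimp only
      rw [rpow_one, neg_mul]
    have hsplit : (∫ x in Ioi (0 : ℝ), F x)
        = (∫ x in Ioc (0 : ℝ) 1, F x) + ∫ x in Ioi (1 : ℝ), F x := by
      rw [← setIntegral_union (Ioc_disjoint_Ioi le_rfl) measurableSet_Ioi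
        (hint.mono_set Ioc_subset_Ioi_self)
        (hint.mono_set (Ioi_subset_Ioi zero_le_one)),
        Ioc_union_Ioi_eq_Ioi zero_le_one]
    have hΓint : (∫ x in Ioi (0 : ℝ), F x) = Gamma s * l ^ (α - i) := by
      rw [hF, integral_rpow_mul_exp_neg_mul_Ioi hs0 hl]
      rw [one_div, inv_rpow hl.le, ← rpow_neg hl.le, mul_comm]
      congr 2
      simp only [hsdef]; ring
    have hleft : (∫ x in Ioi (1 : ℝ), x ^ i * Real.exp (-(l * x)) * (α * x ^ (-(α + 1))))
        = α * ∫ x in Ioi (1 : ℝ), F x := by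
      rw [← integral_const_mul]
      refine setIntegral_congr_fun measurableSet_Ioi (fun x hx => ?_)
      have hx0 : (0 : ℝ) < x := lt_trans one_pos hx
      have h1 : (x : ℝ) ^ i = x ^ ((i : ℝ)) := (rpow_natCast x i).symm
      have h2 : x ^ ((i : ℝ)) * x ^ (-(α + 1)) = x ^ (s - 1) := by
        rw [← rpow_add hx0]; congr 1; simp only [hsdef]; ring
      rw [hF]
      calc x ^ i * Real.exp (-(l * x)) * (α * x ^ (-(α + 1)))
          = α * (x ^ ((i : ℝ)) * x ^ (-(α + 1)) * Real.exp (-(l * x))) := by rw [h1]; ring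
        _ = α * (x ^ (s - 1) * Real.exp (-(l * x))) := by rw [h2]
    have := hsplit
    rw [hΓint] at this
    rw [hleft]
    have : (∫ x in Ioi (1 : ℝ), F x)
        = Gamma s * l ^ (α - i) - ∫ x in Ioc (0 : ℝ) 1, F x := by linarith
    rw [this]; ring
  -- integrability of x ^ (s-1) on Ioc 0 1
  have hibnd : IntegrableOn (fun x : ℝ => x ^ (s - 1)) (Ioc 0 1) := by
    have := intervalIntegral.intervalIntegrable_rpow' (a := (0 : ℝ)) (b := 1)
      (by linarith : (-1 : ℝ) < s - 1)
    exact (intervalIntegrable_iff_integrableOn_Ioc_of_le zero_le_one).mp this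
  set C : ℝ := ∫ x in Ioc (0 : ℝ) 1, x ^ (s - 1) with hC
  -- bound on the error term
  have hbound : ∀ l : ℝ, 0 < l →
      ‖∫ x in Ioc (0 : ℝ) 1, x ^ (s - 1) * Real.exp (-(l * x))‖ ≤ C := by
    intro l hl
    refine norm_integral_le_of_norm_le hibnd ?_
    refine (ae_restrict_iff' measurableSet_Ioc).mpr (ae_of_all _ (fun x hx => ?_))
    have hx0 : 0 < x := hx.1
    have hxp : (0 : ℝ) ≤ x ^ (s - 1) := rpow_nonneg hx0.le _
    rw [Real.norm_eq_abs, abs_mul, abs_of_nonneg hxp, abs_of_pos (exp_pos _)]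
    have : Real.exp (-(l * x)) ≤ 1 := by
      rw [exp_le_one_iff]; nlinarith
    nlinarith
  -- g tends to infinity in norm
  have hg : Tendsto (fun l : ℝ => ‖α * Gamma s * l ^ (α - i)‖) (𝓝[>] (0 : ℝ)) atTop := by
    have h1 : Tendsto (fun l : ℝ => l ^ (α - i)) (𝓝[>] (0 : ℝ)) atTop := by
      have h2 : Tendsto (fun l : ℝ => (l⁻¹) ^ s) (𝓝[>] (0 : ℝ)) atTop :=
        (tendsto_rpow_atTop hs0).comp tendsto_inv_nhdsGT_zero
      refine h2.congr' ?_
      filter_upwards [self_mem_nhdsWithin] with l hl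
      rw [inv_rpow (le_of_lt hl), ← rpow_neg (le_of_lt hl)]
      congr 1; simp only [hsdef]; ring
    have h3 : Tendsto (fun l : ℝ => α * Gamma s * l ^ (α - i)) (𝓝[>] (0 : ℝ)) atTop :=
      h1.const_mul_atTop (by positivity)
    exact (tendsto_abs_atTop_atTop.comp h3).congr (fun l => (Real.norm_eq_abs _).symm)
  rw [IsEquivalent]
  have hO : ((fun l : ℝ =>
        ∫ x in Ioi (1 : ℝ), x ^ i * Real.exp (-(l * x)) * (α * x ^ (-(α + 1)))) -
      fun l : ℝ => α * Gamma s * l ^ (α - i)) =O[𝓝[>] (0 : ℝ)] (fun _ : ℝ => (1 : ℝ)) := by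
    rw [isBigO_iff]
    refine ⟨α * C, ?_⟩
    filter_upwards [self_mem_nhdsWithin] with l hl
    have hl' : (0 : ℝ) < l := hl
    simp only [Pi.sub_apply, key l hl']
    rw [norm_one, mul_one]
    have : α * Gamma s * l ^ (α - i) -
        α * (∫ x in Ioc (0 : ℝ) 1, x ^ (s - 1) * Real.exp (-(l * x))) -
        α * Gamma s * l ^ (α - i)
        = -(α * ∫ x in Ioc (0 : ℝ) 1, x ^ (s - 1) * Real.exp (-(l * x))) := by ring
    rw [this, norm_neg, Real.norm_eq_abs, abs_mul, abs_of_pos hα0]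
    have := hbound l hl'
    rw [Real.norm_eq_abs] at this
    nlinarith
  have h1 : (fun _ : ℝ => (1 : ℝ)) =o[𝓝[>] (0 : ℝ)]
      (fun l : ℝ => α * Gamma s * l ^ (α - i)) :=
    isLittleO_const_left.mpr (Or.inr hg)
  exact hO.trans_isLittleO h1
end
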